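/- Let θ(Z₁,Z₂,Z₃,Z₄) be the degree-6 bicuspidal theta polynomial (as in the factorization θ = (Z₁³ − 24Z₁² + 192Z₁ + 16Z₂ − 336)(Z₃³ + 24Z₃² + 192Z₃ + 16Z₄ + 336) + 36(Z₁Z₃ + 10Z₁ − 6Z₃ − 56)(Z₁Z₃ + 6Z₁ − 10Z₃ − 56)). For real x, y, t, substitute Z₁ = 4x + 8iy + 12t + 16, Z₂ = −12t − 22, Z₃ = 4x − 8iy + 12t, Z₄ = −12t. Then the resulting value τ(x,y,t) is a real number for all real x, y, t. -/
import Mathlib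


open Complex

/-- The degree-6 bicuspidal theta polynomial. -/
noncomputable def thetaBC (Z₁ Z₂ Z₃ Z₄ : ℂ) : ℂ :=
  (Z₁ ^ 3 - 24 * Z₁ ^ 2 + 192 * Z₁ + 16 * Z₂ - 336)
      * (Z₃ ^ 3 + 24 * Z₃ ^ 2 + 192 * Z₃ + 16 * Z₄ + 336)
    + 36 * (Z₁ * Z₃ + 10 * Z₁ - 6 * Z₃ - 56) * (Z₁ * Z₃ + 6 * Z₁ - 10 * Z₃ - 56)

/-- The tau-function of the three-lump KP1 solution. -/
noncomputable def tauBC (x y t : ℝ) : ℂ :=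
  thetaBC (4 * x + 8 * I * y + 12 * t + 16) (-12 * t - 22)
    (4 * x - 8 * I * y + 12 * t) (-12 * t)

/-- The substituted tau-function takes only real values for real (x, y, t). -/
theorem tauBC_real (x y t : ℝ) : (tauBC x y t).im = 0 := by
  simp only [tauBC, thetaBC, pow_succ, pow_zero, one_mul]
  simp [Complex.add_im, Complex.add_re, Complex.sub_im, Complex.sub_re,
    Complex.mul_im, Complex.mul_re, Complex.I_re, Complex.I_im,
    Complex.ofReal_re, Complex.ofReal_im]
  ring
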